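/- arXiv:2110.14971 — 2 statements merged into one kernel-verified Lean document; each statement's English description precedes it below -/
import Mathlib

section
/- Let k ≥ m ≥ 1, let U ⊆ ℂ^k and V ⊆ ℂ^m be open sets, and let π : ℂ^k → ℂ^m be holomorphic on U with π(U) ⊆ V, such that at every point of U the complex derivative of π : ℂ^k → ℂ^m is surjective (i.e., π is a holomorphic submersion on U). Let g : ℂ^m → [0, ∞] be a measurable function. If g is locally integrable on V with respect to Lebesgue measure on ℂ^m, then g ∘ π is locally integrable on U with respect to Lebesgue measure on ℂ^k. (This is the local coordinate form of the inclusion π*𝒥(φ) ⊆ 𝒥(π*φ) for a smooth morphism π, proved by factoring π locally as the composition of an étale map and a projection.) -/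
open MeasureTheory Metric Set

/-- A `[0,∞]`-valued function is locally integrable on `s` if every point of `s` has a
neighborhood (within `s`) on which the (lower) integral of `g` is finite. -/
def ELocallyIntegrableOn {α : Type*} [MeasurableSpace α] [TopologicalSpace α]
    (g : α → ENNReal) (s : Set α) (μ : Measure α) : Prop :=
  ∀ x ∈ s, ∃ t ∈ nhdsWithin x s, ∫⁻ y in t, g y ∂μ < ⊤

/-- Cauchy-estimate based continuity of the derivative for a several-variable holomorphic map. -/
theorem continuousOn_fderiv_of_differentiableOn
    {E F : Type*} [NormedAddCommGroup E] [NormedSpace ℂ E] [ProperSpace E]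
    [NormedAddCommGroup F] [NormedSpace ℂ F]
    {f : E → F} {U : Set E} (hU : IsOpen U) (hf : DifferentiableOn ℂ f U) :
    ContinuousOn (fderiv ℂ f) U := by
  have hdiff : ∀ x ∈ U, DifferentiableAt ℂ f x := fun x hx =>
    hf.differentiableAt (hU.mem_nhds hx)
  refine fun x₀ hx₀ => (?_ : ContinuousAt _ x₀).continuousWithinAt
  obtain ⟨R, hR, hRU⟩ := (Metric.nhds_basis_closedBall.mem_iff).1 (hU.mem_nhds hx₀)
  set r := R / 3 with hr
  have hr0 : 0 < r := by positivity
  have hball : closedBall x₀ (3 * r) ⊆ U := by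
    rw [hr]; convert hRU using 2; ring
  -- uniform continuity of f on the compact closed ball
  have hKc : IsCompact (closedBall x₀ (3 * r)) := isCompact_closedBall _ _
  have hfc : UniformContinuousOn f (closedBall x₀ (3 * r)) :=
    hKc.uniformContinuousOn_of_continuous ((hf.mono hball).continuousOn)
  rw [Metric.continuousAt_iff]
  intro ε hε
  have hε2 : 0 < ε / 2 * r := by positivity
  obtain ⟨δ, hδ0, hδ⟩ := (Metric.uniformContinuousOn_iff).1 hfc (ε / 2 * r) hε2
  refine ⟨min δ r, lt_min hδ0 hr0, fun {x} hx => ?_⟩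
  have hxr : dist x x₀ < r := lt_of_lt_of_le hx (min_le_right _ _)
  have hxδ : dist x x₀ < δ := lt_of_lt_of_le hx (min_le_left _ _)
  have hxU : x ∈ U := hball (by
    simp only [mem_closedBall]
    nlinarith [dist_nonneg (x := x) (y := x₀)])
  rw [dist_eq_norm]
  have key : ‖fderiv ℂ f x - fderiv ℂ f x₀‖ ≤ ε / 2 := by
    refine ContinuousLinearMap.opNorm_le_bound' _ (by positivity) fun v hv => ?_
    set u := ‖v‖⁻¹ • v with hu
    have hvn : ‖v‖ ≠ 0 := hv
    have hun : ‖u‖ = 1 := by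
      rw [hu, norm_smul, norm_inv, norm_norm, inv_mul_cancel₀ hvn]
    -- the sliced difference function
    set ψ : ℂ → F := fun z => f (x + z • u) - f (x₀ + z • u) with hψ
    -- membership facts
    have hmem : ∀ (y : E), dist y x₀ < r → ∀ z : ℂ, ‖z‖ ≤ 2 * r →
        y + z • u ∈ closedBall x₀ (3 * r) := by
      intro y hy z hz
      simp only [mem_closedBall]
      calc dist (y + z • u) x₀ ≤ dist (y + z • u) y + dist y x₀ := dist_triangle _ _ _
        _ ≤ ‖z • u‖ + r := by
            have : dist (y + z • u) y = ‖z • u‖ := by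
              simp [dist_eq_norm]
            rw [this]
            exact add_le_add le_rfl hy.le
        _ ≤ 2 * r + r := by rw [norm_smul, hun, mul_one]; exact add_le_add hz le_rfl
        _ = 3 * r := by ring
    -- differentiability of ψ on ball 0 (2r)… we use closure (ball 0 r) ⊆ closedBall 0 r
    have hψd : DiffContOnCl ℂ ψ (ball (0:ℂ) r) := by
      refine DifferentiableOn.diffContOnCl ?_
      refine DifferentiableOn.sub ?_ ?_ <;>
      · intro z hz
        have hz' : ‖z‖ ≤ 2 * r := by
          have := mem_closedBall.1 (closure_ball_subset_closedBall hz)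
          simp only [dist_zero_right] at this ⊢
          linarith
        refine DifferentiableAt.differentiableWithinAt ?_
        refine DifferentiableAt.comp z (hdiff _ ?_) ?_
        · exact hball (hmem _ (by first | exact hxr | simpa using hr0) z hz')
        · exact (differentiableAt_const _).add ((differentiableAt_id).smul_const u)
    -- derivative of ψ at 0
    have hd1 : HasDerivAt (fun z : ℂ => f (x + z • u)) (fderiv ℂ f x u) 0 := by
      have h1 : HasDerivAt (fun z : ℂ => x + z • u) u 0 := by
        simpa using ((hasDerivAt_id (0:ℂ)).smul_const u).const_add x
      have h2 : HasFDerivAt f (fderiv ℂ f x) (x + (0:ℂ) • u) := by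
        simpa using (hdiff x hxU).hasFDerivAt
      exact h2.comp_hasDerivAt (0:ℂ) h1
    have hd0 : HasDerivAt (fun z : ℂ => f (x₀ + z • u)) (fderiv ℂ f x₀ u) 0 := by
      have h1 : HasDerivAt (fun z : ℂ => x₀ + z • u) u 0 := by
        simpa using ((hasDerivAt_id (0:ℂ)).smul_const u).const_add x₀
      have h2 : HasFDerivAt f (fderiv ℂ f x₀) (x₀ + (0:ℂ) • u) := by
        simpa using (hdiff x₀ hx₀).hasFDerivAt
      exact h2.comp_hasDerivAt (0:ℂ) h1
    have hψ0 : deriv ψ 0 = fderiv ℂ f x u - fderiv ℂ f x₀ u := (hd1.sub hd0).deriv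
    -- sphere bound
    have hsb : ∀ z ∈ sphere (0:ℂ) r, ‖ψ z‖ ≤ ε / 2 * r := by
      intro z hz
      have hz' : ‖z‖ = r := by simpa using hz
      have h1 : x + z • u ∈ closedBall x₀ (3 * r) :=
        hmem x hxr z (by rw [hz']; linarith)
      have h0 : x₀ + z • u ∈ closedBall x₀ (3 * r) :=
        hmem x₀ (by simpa using hr0) z (by rw [hz']; linarith)
      have hdist : dist (x + z • u) (x₀ + z • u) < δ := by
        simpa [dist_eq_norm, add_sub_add_right_eq_sub] using hxδ
      have := hδ _ h1 _ h0 hdist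
      rw [hψ, ← dist_eq_norm]
      exact this.le
    have := Complex.norm_deriv_le_of_forall_mem_sphere_norm_le hr0 hψd hsb
    rw [hψ0] at this
    rw [mul_div_assoc, div_self hr0.ne', mul_one] at this
    have hle : ‖(fderiv ℂ f x - fderiv ℂ f x₀) u‖ ≤ ε / 2 := by
      simpa [ContinuousLinearMap.sub_apply] using this
    have hvu : v = ‖v‖ • u := by
      rw [hu, smul_smul, mul_inv_cancel₀ hvn, one_smul]
    calc ‖(fderiv ℂ f x - fderiv ℂ f x₀) v‖
        = ‖v‖ * ‖(fderiv ℂ f x - fderiv ℂ f x₀) u‖ := by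
          conv_lhs => rw [hvu, ContinuousLinearMap.map_smul_of_tower]
          rw [norm_smul, norm_norm]
      _ ≤ ‖v‖ * (ε / 2) := by
          exact mul_le_mul_of_nonneg_left hle (norm_nonneg _)
      _ = ε / 2 * ‖v‖ := by ring
  linarith [key]


theorem exists_prod_bijective (k m : ℕ) (hkm : m ≤ k)
    (A : (Fin k → ℂ) →L[ℂ] (Fin m → ℂ)) (hA : Function.Surjective A) :
    ∃ L : (Fin k → ℂ) →L[ℂ] (Fin (k - m) → ℂ), Function.Bijective ⇑(A.prod L) := by
  set K := LinearMap.ker (A : (Fin k → ℂ) →ₗ[ℂ] (Fin m → ℂ)) with hK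
  have hrank : Module.finrank ℂ K = k - m := by
    have h1 := LinearMap.finrank_range_add_finrank_ker (A : (Fin k → ℂ) →ₗ[ℂ] (Fin m → ℂ))
    have h2 : LinearMap.range (A : (Fin k → ℂ) →ₗ[ℂ] (Fin m → ℂ)) = ⊤ :=
      LinearMap.range_eq_top.2 hA
    rw [h2] at h1
    rw [show Module.finrank ℂ (⊤ : Submodule ℂ (Fin m → ℂ)) = m by
      simpa using Module.finrank_fin_fun ℂ (n := m),
      Module.finrank_fin_fun] at h1
    rw [hK]
    omega
  have : FiniteDimensional ℂ K := inferInstance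
  have hq : Module.finrank ℂ K = Module.finrank ℂ (Fin (k - m) → ℂ) := by
    rw [hrank, Module.finrank_fin_fun]
  let q : K ≃ₗ[ℂ] (Fin (k - m) → ℂ) := LinearEquiv.ofFinrankEq _ _ hq
  obtain ⟨W, hW⟩ := Submodule.exists_isCompl K
  let proj : (Fin k → ℂ) →ₗ[ℂ] K := Submodule.linearProjOfIsCompl K W hW
  let L : (Fin k → ℂ) →L[ℂ] (Fin (k - m) → ℂ) :=
    LinearMap.toContinuousLinearMap (q.toLinearMap ∘ₗ proj)
  refine ⟨L, ?_⟩
  have hinj : Function.Injective ⇑(A.prod L) := by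
    rw [← ContinuousLinearMap.coe_coe, ← LinearMap.ker_eq_bot]
    rw [Submodule.eq_bot_iff]
    intro x hx
    simp only [LinearMap.mem_ker, ContinuousLinearMap.coe_coe,
      ContinuousLinearMap.prod_apply, Prod.mk_eq_zero] at hx
    obtain ⟨hAx, hLx⟩ := hx
    have hxK : x ∈ K := by simpa [hK, LinearMap.mem_ker] using hAx
    have hproj : proj x = ⟨x, hxK⟩ := Submodule.linearProjOfIsCompl_apply_left hW ⟨x, hxK⟩
    have : q ⟨x, hxK⟩ = 0 := by
      simpa [L, LinearMap.toContinuousLinearMap, hproj] using hLx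
    have hx0 : (⟨x, hxK⟩ : K) = 0 := by
      apply q.injective
      rw [this, map_zero]
    simpa using congrArg Subtype.val hx0
  refine ⟨hinj, ?_⟩
  have hfr : Module.finrank ℂ (Fin k → ℂ)
      = Module.finrank ℂ ((Fin m → ℂ) × (Fin (k - m) → ℂ)) := by
    rw [Module.finrank_prod, Module.finrank_fin_fun, Module.finrank_fin_fun,
      Module.finrank_fin_fun]
    omega
  have := (LinearMap.injective_iff_surjective_of_finrank_eq_finrank
    (f := ((A.prod L) : (Fin k → ℂ) →ₗ[ℂ] ((Fin m → ℂ) × (Fin (k - m) → ℂ)))) hfr).1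
  exact this hinj



theorem exists_iota (k m n : ℕ) (h : m + n = k) :
    ∃ ι : ((Fin m → ℂ) × (Fin n → ℂ)) ≃L[ℂ] (Fin k → ℂ),
      MeasurePreserving ⇑ι volume volume := by
  set E : Fin m ⊕ Fin n ≃ Fin k := finSumFinEquiv.trans (finCongr h) with hE
  let ιₗ : ((Fin m → ℂ) × (Fin n → ℂ)) ≃ₗ[ℂ] (Fin k → ℂ) :=
    (LinearEquiv.sumArrowLequivProdArrow (Fin m) (Fin n) ℂ ℂ).symm.trans
      (LinearEquiv.funCongrLeft ℂ ℂ E.symm)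
  refine ⟨ιₗ.toContinuousLinearEquiv, ?_⟩
  have h1 : MeasurePreserving
      (⇑(MeasurableEquiv.sumPiEquivProdPi (fun _ : Fin m ⊕ Fin n => ℂ)).symm)
      volume volume := volume_measurePreserving_sumPiEquivProdPi_symm _
  have h2 : MeasurePreserving (⇑(MeasurableEquiv.piCongrLeft (fun _ : Fin k => ℂ) E))
      volume volume := volume_measurePreserving_piCongrLeft _ _
  have hcoe : ⇑ιₗ.toContinuousLinearEquiv =
      (⇑(MeasurableEquiv.piCongrLeft (fun _ : Fin k => ℂ) E)) ∘
      (⇑(MeasurableEquiv.sumPiEquivProdPi (fun _ : Fin m ⊕ Fin n => ℂ)).symm) := by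
    funext z
    ext i
    have lhs : ιₗ.toContinuousLinearEquiv z i
        = ((LinearEquiv.sumArrowLequivProdArrow (Fin m) (Fin n) ℂ ℂ).symm (z.1, z.2))
            (E.symm i) := rfl
    have rhs : ((⇑(MeasurableEquiv.piCongrLeft (fun _ : Fin k => ℂ) E)) ∘
        (⇑(MeasurableEquiv.sumPiEquivProdPi (fun _ : Fin m ⊕ Fin n => ℂ)).symm)) z i
        = Sum.rec z.1 z.2 (E.symm i) := by
      simp only [Function.comp_apply, MeasurableEquiv.coe_piCongrLeft,
        MeasurableEquiv.coe_sumPiEquivProdPi_symm]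
      rw [Equiv.piCongrLeft_apply, eqRec_eq_cast, cast_eq, Equiv.sumPiEquivProdPi_symm_apply]
    rw [lhs, rhs]
    rcases hs : E.symm i with j | j <;> rfl
  rw [hcoe]
  exact h2.comp h1

/-- **Submersion case**: if `π : ℂ^k → ℂ^m` is holomorphic on `U` with surjective
derivative at every point of `U` (holomorphic submersion), `π(U) ⊆ V`, and `g` is
locally integrable on the open set `V`, then `g ∘ π` is locally integrable on `U`. -/
theorem bertini_submersion_case (k m : ℕ) (hm : 1 ≤ m) (hkm : m ≤ k)
    (U : Set (Fin k → ℂ)) (V : Set (Fin m → ℂ)) (hU : IsOpen U) (hV : IsOpen V)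
    (π : (Fin k → ℂ) → (Fin m → ℂ)) (hπ : DifferentiableOn ℂ π U)
    (hUV : Set.MapsTo π U V)
    (hsub : ∀ x ∈ U, Function.Surjective (fderiv ℂ π x))
    (g : (Fin m → ℂ) → ENNReal) (hg : Measurable g)
    (h : ELocallyIntegrableOn g V volume) :
    ELocallyIntegrableOn (g ∘ π) U volume := by
  intro x₀ hx₀
  have hfd : ∀ x ∈ U, HasFDerivAt π (fderiv ℂ π x) x := fun x hx =>
    (hπ.differentiableAt (hU.mem_nhds hx)).hasFDerivAt
  have hcont : ContinuousOn (fderiv ℂ π) U := continuousOn_fderiv_of_differentiableOn hU hπ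
  obtain ⟨L, hbij⟩ := exists_prod_bijective k m hkm (fderiv ℂ π x₀) (hsub x₀ hx₀)
  obtain ⟨ι, hι⟩ := exists_iota k m (k - m) (by omega)
  set ιc : ((Fin m → ℂ) × (Fin (k - m) → ℂ)) →L[ℂ] (Fin k → ℂ) :=
    (ι : ((Fin m → ℂ) × (Fin (k - m) → ℂ)) →L[ℂ] (Fin k → ℂ)) with hιc
  set D : (Fin k → ℂ) → (Fin k → ℂ) →L[ℂ] (Fin k → ℂ) :=
    fun x => ιc.comp ((fderiv ℂ π x).prod L) with hD
  set Φ : (Fin k → ℂ) → (Fin k → ℂ) := fun x => ι (π x, L x) with hΦ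
  have hΦd : ∀ x ∈ U, HasFDerivAt Φ (D x) x := by
    intro x hx
    have h1 : HasFDerivAt (fun y => (π y, L y)) ((fderiv ℂ π x).prod L) x :=
      (hfd x hx).prodMk L.hasFDerivAt
    exact (ιc.hasFDerivAt).comp x h1
  -- continuity of `D` on `U`
  have hDc : ContinuousOn D U := by
    have h2 : Continuous fun A : (Fin k → ℂ) →L[ℂ] (Fin m → ℂ) => ιc.comp (A.prod L) := by
      have hc1 := ((ContinuousLinearMap.compL ℂ (Fin k → ℂ)
        ((Fin m → ℂ) × (Fin (k - m) → ℂ)) (Fin k → ℂ)) ιc).continuous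
      have hc2 : Continuous fun A : (Fin k → ℂ) →L[ℂ] (Fin m → ℂ) => A.prod L := by
        have := (ContinuousLinearMap.prodₗᵢ (E := Fin k → ℂ) (F := Fin m → ℂ)
          (G := Fin (k - m) → ℂ) (𝕜 := ℂ) ℂ).continuous
        exact this.comp (continuous_id.prodMk continuous_const)
      exact hc1.comp hc2
    exact h2.comp_continuousOn hcont
  -- determinant function
  set φ : (Fin k → ℂ) → ℝ := fun x => |((D x).restrictScalars ℝ).det| with hφ
  have hφc : ContinuousOn φ U := by
    have h3 : Continuous fun B : (Fin k → ℂ) →L[ℂ] (Fin k → ℂ) =>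
        |(B.restrictScalars ℝ).det| := by
      exact continuous_abs.comp (ContinuousLinearMap.continuous_det.comp
        (ContinuousLinearMap.restrictScalarsIsometry ℂ (Fin k → ℂ) (Fin k → ℂ) ℝ ℝ).continuous)
    exact h3.comp_continuousOn hDc
  -- bijectivity and nonvanishing determinant at x₀
  have hbijD : Function.Bijective (D x₀) := by
    have hDcoe : ⇑(D x₀) = ⇑ι ∘ ⇑((fderiv ℂ π x₀).prod L) := rfl
    rw [hDcoe]
    exact ι.bijective.comp hbij
  have hdet0 : ((D x₀).restrictScalars ℝ).det ≠ 0 := by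
    set fR : (Fin k → ℂ) →ₗ[ℝ] (Fin k → ℂ) :=
      (((D x₀).restrictScalars ℝ) : (Fin k → ℂ) →ₗ[ℝ] (Fin k → ℂ)) with hfR
    have hbijR : Function.Bijective fR := hbijD
    have := LinearEquiv.isUnit_det' (LinearEquiv.ofBijective fR hbijR)
    rw [show ((LinearEquiv.ofBijective fR hbijR : (Fin k → ℂ) →ₗ[ℝ] (Fin k → ℂ))) = fR from rfl]
      at this
    exact this.ne_zero
  set c₀ : ℝ := φ x₀ with hc₀
  have hc₀pos : 0 < c₀ := abs_pos.2 hdet0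
  -- strict derivative and local homeomorphism at x₀
  have hstrict : HasStrictFDerivAt Φ (D x₀) x₀ := by
    refine hasStrictFDerivAt_of_hasFDerivAt_of_continuousAt ?_
      (hDc.continuousAt (hU.mem_nhds hx₀))
    filter_upwards [hU.mem_nhds hx₀] with y hy using hΦd y hy
  set Deq : (Fin k → ℂ) ≃L[ℂ] (Fin k → ℂ) :=
    (LinearEquiv.ofBijective ((D x₀) : (Fin k → ℂ) →ₗ[ℂ] (Fin k → ℂ))
      hbijD).toContinuousLinearEquiv with hDeq
  have hDeqcoe : (Deq : (Fin k → ℂ) →L[ℂ] (Fin k → ℂ)) = D x₀ := by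
    ext v; rfl
  have hstrict' : HasStrictFDerivAt Φ
      ((Deq : (Fin k → ℂ) ≃L[ℂ] (Fin k → ℂ)) : (Fin k → ℂ) →L[ℂ] (Fin k → ℂ)) x₀ := by
    rwa [hDeqcoe]
  set e := hstrict'.toOpenPartialHomeomorph Φ with he
  have hx₀e : x₀ ∈ e.source := hstrict'.mem_toOpenPartialHomeomorph_source
  have hecoe : ⇑e = Φ := hstrict'.toOpenPartialHomeomorph_coe
  -- local integrability data near π x₀
  obtain ⟨t, htmem, hti⟩ := h (π x₀) (hUV hx₀)
  have htn : t ∈ nhds (π x₀) := by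
    rwa [nhdsWithin_eq_nhds.2 (hV.mem_nhds (hUV hx₀))] at htmem
  obtain ⟨t'', ht''sub, ht''open, ht''mem⟩ := _root_.mem_nhds_iff.1 htn
  have hπcont : ContinuousAt π x₀ := hπ.continuousOn.continuousAt (hU.mem_nhds hx₀)
  -- choose a small closed ball
  have hN : U ∩ (e.source ∩ (π ⁻¹' t'' ∩ φ ⁻¹' Ioi (c₀ / 2))) ∈ nhds x₀ := by
    refine Filter.inter_mem (hU.mem_nhds hx₀) (Filter.inter_mem (e.open_source.mem_nhds hx₀e)
      (Filter.inter_mem (hπcont.preimage_mem_nhds (ht''open.mem_nhds ht''mem)) ?_))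
    exact (hφc.continuousAt (hU.mem_nhds hx₀)).preimage_mem_nhds
      (isOpen_Ioi.mem_nhds (by simp only [mem_Ioi]; linarith))
  obtain ⟨r, hr0, hrsub⟩ := Metric.nhds_basis_closedBall.mem_iff.1 hN
  set s := Metric.closedBall x₀ r with hs
  have hsU : s ⊆ U := fun x hx => (hrsub hx).1
  have hse : s ⊆ e.source := fun x hx => (hrsub hx).2.1
  have hst : ∀ x ∈ s, π x ∈ t'' := fun x hx => (hrsub hx).2.2.1
  have hsdet : ∀ x ∈ s, c₀ / 2 < φ x := fun x hx => (hrsub hx).2.2.2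
  have hs_meas : MeasurableSet s := measurableSet_closedBall
  set K := L '' s with hK
  have hKfin : volume K < ⊤ :=
    ((isCompact_closedBall _ _).image L.continuous).measure_lt_top
  have hinj : Set.InjOn Φ s := by
    have := e.injOn
    rw [hecoe] at this
    exact this.mono hse
  have hD' : ∀ x ∈ s, HasFDerivWithinAt Φ ((D x).restrictScalars ℝ) s x := fun x hx =>
    ((hΦd x (hsU hx)).restrictScalars ℝ).hasFDerivWithinAt
  have hCOV := lintegral_image_eq_lintegral_abs_det_fderiv_mul volume hs_meas hD' hinj
    (fun y => g ((ι.symm y).1))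
  have himg : Φ '' s ⊆ ⇑ι '' (t'' ×ˢ K) := by
    rintro y ⟨x, hx, rfl⟩
    exact ⟨(π x, L x), ⟨hst x hx, Set.mem_image_of_mem _ hx⟩, rfl⟩
  have hcinv_ne_top : (ENNReal.ofReal (c₀ / 2))⁻¹ ≠ ⊤ :=
    ENNReal.inv_ne_top.2 (ENNReal.ofReal_pos.2 (by linarith)).ne'
  refine ⟨s, mem_nhdsWithin_of_mem_nhds (Metric.closedBall_mem_nhds x₀ hr0), ?_⟩
  calc ∫⁻ x in s, (g ∘ π) x ∂volume
      ≤ ∫⁻ x in s, (ENNReal.ofReal (c₀ / 2))⁻¹ *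
          (ENNReal.ofReal (φ x) * g (π x)) ∂volume := by
        refine lintegral_mono_ae ?_
        rw [ae_restrict_iff' hs_meas]
        filter_upwards with x hx
        have h1 : ENNReal.ofReal (c₀ / 2) ≤ ENNReal.ofReal (φ x) :=
          ENNReal.ofReal_le_ofReal (hsdet x hx).le
        have h2 : (g ∘ π) x = (ENNReal.ofReal (c₀ / 2))⁻¹ *
            (ENNReal.ofReal (c₀ / 2) * g (π x)) := by
          rw [← mul_assoc, ENNReal.inv_mul_cancel
            (ENNReal.ofReal_pos.2 (by linarith)).ne' ENNReal.ofReal_ne_top, one_mul]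
          rfl
        rw [h2]
        exact mul_le_mul_right (mul_le_mul_left h1 _) _
    _ = (ENNReal.ofReal (c₀ / 2))⁻¹ *
          ∫⁻ x in s, ENNReal.ofReal (φ x) * g (π x) ∂volume :=
        lintegral_const_mul' _ _ hcinv_ne_top
    _ = (ENNReal.ofReal (c₀ / 2))⁻¹ * ∫⁻ y in Φ '' s, g ((ι.symm y).1) ∂volume := by
        congr 1
        rw [hCOV]
        refine lintegral_congr fun x => ?_
        simp [hΦ, hφ]
    _ ≤ (ENNReal.ofReal (c₀ / 2))⁻¹ * ∫⁻ y in ⇑ι '' (t'' ×ˢ K), g ((ι.symm y).1) ∂volume :=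
        mul_le_mul_right (lintegral_mono_set himg) _
    _ = (ENNReal.ofReal (c₀ / 2))⁻¹ * ∫⁻ z in t'' ×ˢ K, g z.1 ∂volume := by
        congr 1
        rw [← hι.setLIntegral_comp_emb
          (ι.toHomeomorph.measurableEmbedding) (fun y => g ((ι.symm y).1)) (t'' ×ˢ K)]
        refine lintegral_congr fun z => ?_
        simp
    _ = (ENNReal.ofReal (c₀ / 2))⁻¹ * ((∫⁻ w in t'', g w ∂volume) * volume K) := by
        congr 1
        rw [Measure.volume_eq_prod, ← Measure.prod_restrict,
          lintegral_prod (fun z => g z.1) ((hg.comp measurable_fst).aemeasurable)]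
        simp only [lintegral_const, Measure.restrict_apply_univ]
        exact lintegral_mul_const' _ _ hKfin.ne
    _ < ⊤ := by
        refine ENNReal.mul_lt_top (lt_top_iff_ne_top.2 hcinv_ne_top) ?_
        exact ENNReal.mul_lt_top (lt_of_le_of_lt (lintegral_mono_set ht''sub) hti) hKfin
end

section
/- Let k ≥ m ≥ 1, let U ⊆ ℂ^k be an open set, and let π : ℂ^k → ℂ^m be holomorphic on U such that at every point of U the complex derivative of π : ℂ^k → ℂ^m is surjective (i.e., π is a holomorphic submersion on U); then V := π(U) is open in ℂ^m. Let g : ℂ^m → [0, ∞] be a measurable function. Then g is locally integrable on V with respect to Lebesgue measure on ℂ^m if and only if g ∘ π is locally integrable on U with respect to Lebesgue measure on ℂ^k. (This is the local coordinate content of the equality π*𝒥(φ) = 𝒥(π*φ) for multiplier ideals under a smooth morphism π : Y → X of complex manifolds.) -/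
open MeasureTheory

set_option maxHeartbeats 1600000

open Metric Set Filter in
/-- On an open set, the complex Fréchet derivative of a holomorphic function (several
variables allowed) is continuous, by a Cauchy-estimate argument. -/
lemma holo_fderiv_continuousAt {E F : Type*} [NormedAddCommGroup E] [NormedSpace ℂ E]
    [ProperSpace E] [NormedAddCommGroup F] [NormedSpace ℂ F]
    {f : E → F} {U : Set E} (hU : IsOpen U) (hf : DifferentiableOn ℂ f U)
    {x : E} (hx : x ∈ U) : ContinuousAt (fderiv ℂ f) x := by
  obtain ⟨ε, εpos, hball⟩ := Metric.isOpen_iff.1 hU x hx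
  set ρ := ε / 4 with hρ
  have ρpos : 0 < ρ := by positivity
  have hsub : closedBall x (3 * ρ) ⊆ U := by
    refine Subset.trans ?_ hball
    intro z hz
    rw [mem_closedBall] at hz
    rw [mem_ball]
    have : (3 : ℝ) * ρ < ε := by rw [hρ]; linarith
    linarith
  have hdiffAt : ∀ z ∈ U, HasFDerivAt f (fderiv ℂ f z) z := fun z hz =>
    (hf.differentiableAt (hU.mem_nhds hz)).hasFDerivAt
  have hucont : UniformContinuousOn f (closedBall x (3 * ρ)) :=
    (isCompact_closedBall x (3 * ρ)).uniformContinuousOn_of_continuous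
      (hf.continuousOn.mono hsub)
  rw [Metric.continuousAt_iff]
  intro ε' ε'pos
  obtain ⟨δ, δpos, hδ⟩ := (Metric.uniformContinuousOn_iff).1 hucont ((ε' / 2) * ρ)
    (by positivity)
  refine ⟨min δ ρ, lt_min δpos ρpos, ?_⟩
  intro w hw
  have hwδ : dist w x < δ := lt_of_lt_of_le hw (min_le_left _ _)
  have hwρ : dist w x ≤ ρ := le_of_lt (lt_of_lt_of_le hw (min_le_right _ _))
  have hxρ : dist x x ≤ ρ := by simp [le_of_lt ρpos]
  have hwU : w ∈ U := hsub (by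
    rw [mem_closedBall]
    nlinarith [dist_nonneg (x := w) (y := x)])
  rw [dist_eq_norm]
  have key : ∀ v : E, ‖(fderiv ℂ f w - fderiv ℂ f x) v‖ ≤ ε' / 2 * ‖v‖ := by
    intro v
    rcases eq_or_ne v 0 with rfl | hv
    · simp
    have hvn : 0 < ‖v‖ := norm_pos_iff.2 hv
    set R := ρ / ‖v‖ with hR
    have Rpos : 0 < R := by positivity
    set φ : ℂ → F := fun t => f (w + t • v) - f (x + t • v) with hφ
    have hmemball : ∀ z : E, dist z x ≤ ρ → ∀ t : ℂ, ‖t‖ ≤ R →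
        z + t • v ∈ closedBall x (3 * ρ) := by
      intro z hz t ht
      rw [mem_closedBall, dist_eq_norm]
      have heq : z + t • v - x = (z - x) + t • v := by abel
      rw [heq]
      have h1 : ‖(z - x) + t • v‖ ≤ ‖z - x‖ + ‖t • v‖ := norm_add_le _ _
      have h2 : ‖t • v‖ = ‖t‖ * ‖v‖ := norm_smul t v
      have h3 : ‖t‖ * ‖v‖ ≤ R * ‖v‖ := by nlinarith
      have h4 : R * ‖v‖ = ρ := by rw [hR]; exact div_mul_cancel₀ ρ hvn.ne'
      rw [dist_eq_norm] at hz
      linarith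
    -- differentiability of φ on the closed ball of radius R
    have hφdiff : DifferentiableOn ℂ φ (closedBall (0:ℂ) R) := by
      intro t ht
      rw [mem_closedBall, dist_zero_right] at ht
      have haff : ∀ z : E, DifferentiableAt ℂ (fun s : ℂ => z + s • v) t :=
        fun z => (differentiableAt_id.smul_const v).const_add z
      have hz1 : w + t • v ∈ U := hsub (hmemball w hwρ t ht)
      have hz2 : x + t • v ∈ U := hsub (hmemball x hxρ t ht)
      exact (((hf.differentiableAt (hU.mem_nhds hz1)).comp t (haff w)).sub
        ((hf.differentiableAt (hU.mem_nhds hz2)).comp t (haff x))).differentiableWithinAt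
    have hφcl : DiffContOnCl ℂ φ (ball (0:ℂ) R) := by
      apply DifferentiableOn.diffContOnCl
      rwa [closure_ball (0:ℂ) Rpos.ne']
    have hbound : ∀ t ∈ sphere (0:ℂ) R, ‖φ t‖ ≤ (ε' / 2) * ρ := by
      intro t ht
      rw [mem_sphere, dist_zero_right] at ht
      have h1 : w + t • v ∈ closedBall x (3 * ρ) := hmemball w hwρ t (le_of_eq ht)
      have h2 : x + t • v ∈ closedBall x (3 * ρ) := hmemball x hxρ t (le_of_eq ht)
      have h3 : dist (w + t • v) (x + t • v) < δ := by
        rw [dist_add_right]; exact hwδ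
      have := hδ _ h1 _ h2 h3
      rw [dist_eq_norm] at this
      exact le_of_lt this
    -- derivative of φ at 0
    have haffd : ∀ z : E, HasDerivAt (fun s : ℂ => z + s • v) v 0 := by
      intro z
      simpa using ((hasDerivAt_id (0:ℂ)).smul_const v).const_add z
    have hd1 : HasDerivAt (fun t : ℂ => f (w + t • v)) (fderiv ℂ f w v) 0 := by
      have hW : HasFDerivAt f (fderiv ℂ f w) ((fun t : ℂ => w + t • v) 0) := by
        simpa using hdiffAt w hwU
      exact hW.comp_hasDerivAt 0 (haffd w)
    have hd2 : HasDerivAt (fun t : ℂ => f (x + t • v)) (fderiv ℂ f x v) 0 := by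
      have hX : HasFDerivAt f (fderiv ℂ f x) ((fun t : ℂ => x + t • v) 0) := by
        simpa using hdiffAt x hx
      exact hX.comp_hasDerivAt 0 (haffd x)
    have hdφ : HasDerivAt φ (fderiv ℂ f w v - fderiv ℂ f x v) 0 := hd1.sub hd2
    have hderiv : deriv φ 0 = fderiv ℂ f w v - fderiv ℂ f x v := hdφ.deriv
    have hcauchy : ‖deriv φ 0‖ ≤ ((ε' / 2) * ρ) / R :=
      Complex.norm_deriv_le_of_forall_mem_sphere_norm_le Rpos hφcl hbound
    have hval : ((ε' / 2) * ρ) / R = ε' / 2 * ‖v‖ := by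
      rw [hR]; field_simp
    rw [hderiv, hval] at hcauchy
    simpa [ContinuousLinearMap.sub_apply] using hcauchy
  calc ‖fderiv ℂ f w - fderiv ℂ f x‖ ≤ ε' / 2 :=
        ContinuousLinearMap.opNorm_le_bound _ (by positivity) key
    _ < ε' := by linarith

open Metric Set Filter in
/-- Strict differentiability of holomorphic maps on open sets (several variables). -/
lemma holo_hasStrictFDerivAt {E F : Type*} [NormedAddCommGroup E] [NormedSpace ℂ E]
    [ProperSpace E] [NormedAddCommGroup F] [NormedSpace ℂ F]
    {f : E → F} {U : Set E} (hU : IsOpen U) (hf : DifferentiableOn ℂ f U)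
    {x : E} (hx : x ∈ U) : HasStrictFDerivAt f (fderiv ℂ f x) x := by
  refine hasStrictFDerivAt_of_hasFDerivAt_of_continuousAt ?_
    (holo_fderiv_continuousAt hU hf hx)
  filter_upwards [hU.mem_nhds hx] with y hy
  exact (hf.differentiableAt (hU.mem_nhds hy)).hasFDerivAt

open Metric Set Filter in
/-- The key local statement: near any point of `U` we can find an open neighborhood `s`
and an open neighborhood `A` of `π x` such that the finiteness of `∫ g∘π` on `s` and of
`∫ g` on `A` are equivalent. -/
lemma local_chart_lintegral (k m : ℕ) (hkm : m ≤ k)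
    (U : Set (Fin k → ℂ)) (hU : IsOpen U)
    (π : (Fin k → ℂ) → (Fin m → ℂ)) (hπ : DifferentiableOn ℂ π U)
    (hsub : ∀ x ∈ U, Function.Surjective (fderiv ℂ π x))
    (g : (Fin m → ℂ) → ENNReal) (hg : Measurable g)
    {x : Fin k → ℂ} (hx : x ∈ U) {t : Set (Fin k → ℂ)} (ht : IsOpen t) (hxt : x ∈ t)
    (htU : t ⊆ U) :
    ∃ s A, IsOpen s ∧ x ∈ s ∧ s ⊆ t ∧ IsOpen A ∧ π x ∈ A ∧ A ⊆ π '' s ∧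
      ((∫⁻ z in s, g (π z) ∂volume) < ⊤ ↔ (∫⁻ y in A, g y ∂volume) < ⊤) := by
  classical
  set f' : (Fin k → ℂ) →L[ℂ] (Fin m → ℂ) := fderiv ℂ π x with hf'
  -- the kernel has dimension k - m
  have hrange : LinearMap.range (f' : (Fin k → ℂ) →ₗ[ℂ] (Fin m → ℂ)) = ⊤ := by
    rw [hf']
    exact LinearMap.range_eq_top.2 (hsub x hx)
  set K : Submodule ℂ (Fin k → ℂ) := LinearMap.ker (f' : (Fin k → ℂ) →ₗ[ℂ] (Fin m → ℂ))
    with hK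
  have hfrK : Module.finrank ℂ K = k - m := by
    have h1 := LinearMap.finrank_range_add_finrank_ker
      (f' : (Fin k → ℂ) →ₗ[ℂ] (Fin m → ℂ))
    rw [hrange, finrank_top] at h1
    simp only [Module.finrank_fintype_fun_eq_card, Fintype.card_fin] at h1
    rw [← hK] at h1
    omega
  obtain ⟨eK⟩ : Nonempty (K ≃ₗ[ℂ] (Fin (k - m) → ℂ)) :=
    FiniteDimensional.nonempty_linearEquiv_of_finrank_eq
      (by rw [hfrK, Module.finrank_fin_fun])
  obtain ⟨K', hK'⟩ := Submodule.exists_isCompl K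
  set qlin : (Fin k → ℂ) →ₗ[ℂ] (Fin (k - m) → ℂ) :=
    eK.toLinearMap ∘ₗ (K.projectionOnto K' hK') with hqlin
  set q : (Fin k → ℂ) →L[ℂ] (Fin (k - m) → ℂ) := LinearMap.toContinuousLinearMap qlin
    with hq
  set Flin : (Fin k → ℂ) →ₗ[ℂ] (Fin m → ℂ) × (Fin (k - m) → ℂ) :=
    (f' : (Fin k → ℂ) →ₗ[ℂ] (Fin m → ℂ)).prod qlin with hFlin
  have hker : ∀ z : Fin k → ℂ, Flin z = 0 → z = 0 := by
    intro z hz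
    have h1 : f' z = 0 ∧ qlin z = 0 := by
      rw [hFlin] at hz
      simp only [LinearMap.prod_apply, Function.prod, Prod.mk_eq_zero] at hz
      exact hz
    have hzK : z ∈ K := by
      rw [hK, LinearMap.mem_ker]
      exact h1.1
    have h2 : (K.projectionOnto K' hK') z = ⟨z, hzK⟩ := by
      have := Submodule.projectionOnto_apply_left hK' (⟨z, hzK⟩ : K)
      simpa using this
    have h3 : eK (⟨z, hzK⟩ : K) = 0 := by
      have h4 := h1.2
      rw [hqlin] at h4
      rw [LinearMap.comp_apply, h2] at h4
      exact h4
    have h4 : (⟨z, hzK⟩ : K) = 0 := by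
      apply eK.injective
      simp [h3]
    simpa [Submodule.mk_eq_zero] using h4
  have hinj : Function.Injective Flin := by
    rw [← LinearMap.ker_eq_bot, LinearMap.ker_eq_bot']
    intro z hz
    exact hker z hz
  have hfrEq : Module.finrank ℂ (Fin k → ℂ)
      = Module.finrank ℂ ((Fin m → ℂ) × (Fin (k - m) → ℂ)) := by
    rw [Module.finrank_prod]
    simp only [Module.finrank_fintype_fun_eq_card, Fintype.card_fin]
    omega
  have hbij : Function.Bijective Flin :=
    ⟨hinj, (LinearMap.injective_iff_surjective_of_finrank_eq_finrank hfrEq).1 hinj⟩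
  set Φ : (Fin k → ℂ) ≃L[ℂ] (Fin m → ℂ) × (Fin (k - m) → ℂ) :=
    (LinearEquiv.ofBijective Flin hbij).toContinuousLinearEquiv with hΦ
  -- the straightening map F
  set F : (Fin k → ℂ) → (Fin m → ℂ) × (Fin (k - m) → ℂ) := fun z => (π z, q z) with hF
  have hπstrict : HasStrictFDerivAt π f' x := by
    rw [hf']
    exact holo_hasStrictFDerivAt hU hπ hx
  have hΦfun : ⇑Φ = ⇑Flin := by
    rw [hΦ, LinearEquiv.coe_toContinuousLinearEquiv']
    rfl
  have hΦcoe : (Φ : (Fin k → ℂ) →L[ℂ] (Fin m → ℂ) × (Fin (k - m) → ℂ)) = f'.prod q := by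
    apply ContinuousLinearMap.ext
    intro z
    rw [ContinuousLinearMap.prod_apply, ContinuousLinearEquiv.coe_coe, hΦfun]
    rfl
  have hFstrict : HasStrictFDerivAt F
      ((Φ : (Fin k → ℂ) ≃L[ℂ] (Fin m → ℂ) × (Fin (k - m) → ℂ))
        : (Fin k → ℂ) →L[ℂ] (Fin m → ℂ) × (Fin (k - m) → ℂ)) x := by
    rw [hΦcoe]
    exact HasStrictFDerivAt.prodMk hπstrict q.hasStrictFDerivAt
  set PH := HasStrictFDerivAt.toOpenPartialHomeomorph F hFstrict with hPH
  have hxsrc : x ∈ PH.source := HasStrictFDerivAt.mem_toOpenPartialHomeomorph_source hFstrict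
  have hPHF : ⇑PH = F := HasStrictFDerivAt.toOpenPartialHomeomorph_coe hFstrict
  -- a linear identification of the product with ℂ^k
  obtain ⟨ιe⟩ : Nonempty (((Fin m → ℂ) × (Fin (k - m) → ℂ)) ≃ₗ[ℂ] (Fin k → ℂ)) :=
    FiniteDimensional.nonempty_linearEquiv_of_finrank_eq hfrEq.symm
  set ι : ((Fin m → ℂ) × (Fin (k - m) → ℂ)) ≃L[ℂ] (Fin k → ℂ) :=
    ιe.toContinuousLinearEquiv with hι
  -- the full map H and its real derivative / Jacobian
  set ιR : ((Fin m → ℂ) × (Fin (k - m) → ℂ)) →L[ℝ] (Fin k → ℂ) :=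
    ((ι : ((Fin m → ℂ) × (Fin (k - m) → ℂ)) →L[ℂ] (Fin k → ℂ)).restrictScalars ℝ) with hιR
  set H : (Fin k → ℂ) → (Fin k → ℂ) := fun z => ι (F z) with hH
  set D : (Fin k → ℂ) → ((Fin k → ℂ) →L[ℝ] (Fin k → ℂ)) := fun z =>
    ιR.comp (((fderiv ℂ π z).prod q).restrictScalars ℝ) with hD
  set detf : (Fin k → ℂ) → ℝ := fun z => (D z).det with hdetf
  -- continuity of the Jacobian on U
  have hcontD : ContinuousAt detf x := by
    have hT : Continuous fun A : (Fin k → ℂ) →L[ℂ] (Fin m → ℂ) =>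
        ιR.comp ((A.prod q).restrictScalars ℝ) := by
      set T₀ : ((Fin k → ℂ) →L[ℂ] (Fin m → ℂ)) →ₗ[ℝ] ((Fin k → ℂ) →L[ℝ] (Fin k → ℂ)) :=
        { toFun := fun A => ιR.comp
            ((A.prod (0 : (Fin k → ℂ) →L[ℂ] (Fin (k - m) → ℂ))).restrictScalars ℝ)
          map_add' := by
            intro A B
            apply ContinuousLinearMap.ext
            intro z
            show ιR ((A + B) z, (0 : Fin (k - m) → ℂ))
              = ιR (A z, (0 : Fin (k - m) → ℂ)) + ιR (B z, (0 : Fin (k - m) → ℂ))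
            rw [ContinuousLinearMap.add_apply, ← _root_.map_add]
            congr 1
            rw [Prod.mk_add_mk, add_zero]
          map_smul' := by
            intro r A
            apply ContinuousLinearMap.ext
            intro z
            show ιR ((r • A) z, (0 : Fin (k - m) → ℂ))
              = r • ιR (A z, (0 : Fin (k - m) → ℂ))
            rw [ContinuousLinearMap.smul_apply]
            have hsm : ((r • A z, (0 : Fin (k - m) → ℂ))
                : (Fin m → ℂ) × (Fin (k - m) → ℂ)) = r • ((A z, 0) : _) := by
              rw [Prod.smul_mk, smul_zero]
            rw [hsm]
            exact _root_.map_smul ιR r (A z, (0 : Fin (k - m) → ℂ)) } with hT₀def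
      set c₀ : (Fin k → ℂ) →L[ℝ] (Fin k → ℂ) :=
        ιR.comp ((((0 : (Fin k → ℂ) →L[ℂ] (Fin m → ℂ))).prod q).restrictScalars ℝ)
        with hc₀def
      have hsplit : ∀ A : (Fin k → ℂ) →L[ℂ] (Fin m → ℂ),
          ιR.comp ((A.prod q).restrictScalars ℝ) = T₀ A + c₀ := by
        intro A
        apply ContinuousLinearMap.ext
        intro z
        show ιR (A z, q z)
          = ιR (A z, (0 : Fin (k - m) → ℂ)) + ιR ((0 : Fin m → ℂ), q z)
        rw [← _root_.map_add]
        congr 1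
        rw [Prod.mk_add_mk, add_zero, zero_add]
      have hT₀ : Continuous T₀ := T₀.continuous_of_finiteDimensional
      have hcont2 : Continuous fun A : (Fin k → ℂ) →L[ℂ] (Fin m → ℂ) => T₀ A + c₀ :=
        hT₀.add continuous_const
      simpa only [← hsplit] using hcont2
    have hfd : ContinuousAt (fderiv ℂ π) x := holo_fderiv_continuousAt hU hπ hx
    exact ContinuousLinearMap.continuous_det.continuousAt.comp ((hT.continuousAt).comp hfd)
  -- the Jacobian at x is nonzero
  have hdetx : detf x ≠ 0 := by
    have hbijDx : Function.Bijective (D x) := by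
      have h1 : ⇑(D x) = ⇑ι ∘ ⇑Φ := by
        funext z
        show ιR (((fderiv ℂ π x).prod q) z) = ι (Φ z)
        rw [hΦfun]
        rfl
      rw [h1]
      exact ι.bijective.comp Φ.bijective
    have hbijlin : Function.Bijective ((D x) : (Fin k → ℂ) →ₗ[ℝ] (Fin k → ℂ)) := hbijDx
    have h2 : IsUnit (LinearMap.det
        ((LinearEquiv.ofBijective ((D x) : (Fin k → ℂ) →ₗ[ℝ] (Fin k → ℂ)) hbijlin)
          : (Fin k → ℂ) →ₗ[ℝ] (Fin k → ℂ))) :=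
      LinearEquiv.isUnit_det' _
    have h3 : ((LinearEquiv.ofBijective ((D x) : (Fin k → ℂ) →ₗ[ℝ] (Fin k → ℂ)) hbijlin)
        : (Fin k → ℂ) →ₗ[ℝ] (Fin k → ℂ)) = ((D x) : (Fin k → ℂ) →ₗ[ℝ] (Fin k → ℂ)) :=
      LinearMap.ext fun z => rfl
    rw [h3] at h2
    exact h2.ne_zero
  set d : ℝ := |detf x| with hd
  have dpos : 0 < d := abs_pos.2 hdetx
  -- neighborhood where the Jacobian is pinched
  have hev : ∀ᶠ z in nhds x, d / 2 < |detf z| ∧ |detf z| < 2 * d := by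
    have h1 : ∀ᶠ z in nhds x, |detf z - detf x| < d / 2 := by
      have h0 := hcontD (Metric.ball_mem_nhds (detf x) (by positivity : (0:ℝ) < d / 2))
      filter_upwards [h0] with z hz
      simpa [Real.dist_eq] using hz
    filter_upwards [h1] with z hz
    constructor
    · have h5 := abs_sub_abs_le_abs_sub (detf x) (detf z)
      rw [abs_sub_comm (detf x) (detf z)] at h5
      simp only [← hd] at h5 ⊢
      linarith
    · have h5 := abs_sub_abs_le_abs_sub (detf z) (detf x)
      simp only [← hd] at h5 ⊢
      linarith
  obtain ⟨s₁, hs₁P, hs₁open, hxs₁⟩ := _root_.eventually_nhds_iff.1 hev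
  -- pick a product box inside the image of a small open set
  set s₀ : Set (Fin k → ℂ) := (PH.source ∩ t) ∩ s₁ with hs₀
  have hs₀open : IsOpen s₀ := ((PH.open_source.inter ht).inter hs₁open)
  have hxs₀ : x ∈ s₀ := ⟨⟨hxsrc, hxt⟩, hxs₁⟩
  have hs₀src : s₀ ⊆ PH.source := fun z hz => hz.1.1
  have hFs₀open : IsOpen (F '' s₀) := by
    rw [← hPHF]
    exact PH.isOpen_image_of_subset_source hs₀open hs₀src
  have hFxmem : F x ∈ F '' s₀ := mem_image_of_mem F hxs₀
  have hnhds : F '' s₀ ∈ nhds (F x) := hFs₀open.mem_nhds hFxmem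
  rw [show F x = (π x, q x) from rfl, _root_.mem_nhds_prod_iff] at hnhds
  obtain ⟨u, hu, v, hv, huv⟩ := hnhds
  obtain ⟨ra, rapos, hra⟩ := Metric.mem_nhds_iff.1 hu
  obtain ⟨rb, rbpos, hrb⟩ := Metric.mem_nhds_iff.1 hv
  set A : Set (Fin m → ℂ) := ball (π x) ra with hA
  set B : Set (Fin (k - m) → ℂ) := ball (q x) rb with hB
  have hABsub : A ×ˢ B ⊆ F '' s₀ := Subset.trans (Set.prod_mono hra hrb) huv
  set s : Set (Fin k → ℂ) := (PH.source ∩ ⇑PH ⁻¹' (A ×ˢ B)) ∩ (t ∩ s₁) with hs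
  have hsopen : IsOpen s :=
    (PH.continuousOn.isOpen_inter_preimage PH.open_source
      ((isOpen_ball).prod (isOpen_ball))).inter (ht.inter hs₁open)
  have hxmemAB : F x ∈ A ×ˢ B := ⟨mem_ball_self rapos, mem_ball_self rbpos⟩
  have hxs : x ∈ s := by
    refine ⟨⟨hxsrc, ?_⟩, hxt, hxs₁⟩
    rw [mem_preimage, hPHF]
    exact hxmemAB
  have hst : s ⊆ t := fun z hz => hz.2.1
  have hssrc : s ⊆ PH.source := fun z hz => hz.1.1
  have hss₁ : s ⊆ s₁ := fun z hz => hz.2.2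
  have hsU : s ⊆ U := fun z hz => htU (hst hz)
  have hFs : F '' s = A ×ˢ B := by
    apply Subset.antisymm
    · rintro p ⟨z, hz, rfl⟩
      have h6 := hz.1.2
      rwa [mem_preimage, hPHF] at h6
    · intro p hp
      obtain ⟨z, hz, hzp⟩ := hABsub hp
      refine ⟨z, ⟨⟨hz.1.1, ?_⟩, hz.1.2, hz.2⟩, hzp⟩
      rw [mem_preimage, hPHF, hzp]
      exact hp
  have hAsub : A ⊆ π '' s := by
    intro a ha
    have hmem : ((a, q x) : (Fin m → ℂ) × (Fin (k - m) → ℂ)) ∈ A ×ˢ B :=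
      ⟨ha, mem_ball_self rbpos⟩
    rw [← hFs] at hmem
    obtain ⟨z, hz, hzeq⟩ := hmem
    exact ⟨z, hz, congrArg Prod.fst hzeq⟩
  have hFinj : Set.InjOn F s := by
    rw [← hPHF]
    exact PH.injOn.mono hssrc
  -- now the change of variables
  refine ⟨s, A, hsopen, hxs, hst, isOpen_ball, mem_ball_self rapos, hAsub, ?_⟩
  have hsmeas : MeasurableSet s := hsopen.measurableSet
  set Gg : (Fin k → ℂ) → ENNReal := fun y => g ((ι.symm y).1) with hGg
  have hder : ∀ z ∈ s, HasFDerivWithinAt H (D z) s z := by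
    intro z hz
    have hzU : z ∈ U := hsU hz
    have h1 : HasFDerivAt π (fderiv ℂ π z) z :=
      (hπ.differentiableAt (hU.mem_nhds hzU)).hasFDerivAt
    have h2 : HasFDerivAt F ((fderiv ℂ π z).prod q) z := HasFDerivAt.prodMk h1 q.hasFDerivAt
    have h3 : HasFDerivAt H
        ((ι : ((Fin m → ℂ) × (Fin (k - m) → ℂ)) →L[ℂ] (Fin k → ℂ)).comp
          ((fderiv ℂ π z).prod q)) z := (ι.hasFDerivAt).comp z h2
    have h4 := h3.restrictScalars ℝ
    have h5 : (((ι : ((Fin m → ℂ) × (Fin (k - m) → ℂ)) →L[ℂ] (Fin k → ℂ)).comp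
        ((fderiv ℂ π z).prod q)).restrictScalars ℝ) = D z :=
      ContinuousLinearMap.ext fun w => rfl
    rw [h5] at h4
    exact h4.hasFDerivWithinAt
  have hHinj : Set.InjOn H s := fun a ha b hb hab => hFinj ha hb (ι.injective hab)
  have hchange := lintegral_image_eq_lintegral_abs_det_fderiv_mul
    (volume : Measure (Fin k → ℂ)) hsmeas hder hHinj Gg
  have hpoint : ∀ z : Fin k → ℂ, ENNReal.ofReal |(D z).det| * Gg (H z)
      = ENNReal.ofReal |detf z| * g (π z) := by
    intro z
    congr 1
    rw [hGg, hH]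
    simp only
    rw [ι.symm_apply_apply]
  have hchange' : (∫⁻ y in H '' s, Gg y ∂volume)
      = ∫⁻ z in s, ENNReal.ofReal |detf z| * g (π z) ∂volume := by
    rw [hchange]
    exact lintegral_congr fun z => hpoint z
  -- compute the left side by Fubini
  set μP : Measure ((Fin m → ℂ) × (Fin (k - m) → ℂ)) :=
    (volume : Measure (Fin m → ℂ)).prod (volume : Measure (Fin (k - m) → ℂ)) with hμP
  haveI hHaarP : μP.IsAddHaarMeasure := Measure.prod.instIsAddHaarMeasure _ _
  haveI hHaarMap : (μP.map ⇑ι).IsAddHaarMeasure := ι.isAddHaarMeasure_map μP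
  set c : NNReal := (volume : Measure (Fin k → ℂ)).addHaarScalarFactor (μP.map ⇑ι) with hc
  have hcpos : 0 < c := Measure.addHaarScalarFactor_pos_of_isAddHaarMeasure _ _
  have hvol : (volume : Measure (Fin k → ℂ)) = (c : ENNReal) • (μP.map ⇑ι) := by
    rw [← ENNReal.smul_def]
    exact Measure.isAddLeftInvariant_eq_smul _ _
  have hHs : H '' s = ⇑ι '' (A ×ˢ B) := by
    rw [hH, ← hFs, ← Set.image_comp]
    rfl
  have hιAB_open : IsOpen (⇑ι '' (A ×ˢ B)) :=
    ι.toHomeomorph.isOpenMap _ ((isOpen_ball).prod (isOpen_ball))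
  have hGgmeas : Measurable Gg :=
    hg.comp (continuous_fst.comp ι.symm.continuous).measurable
  have hstep3 : (∫⁻ y in ⇑ι '' (A ×ˢ B), Gg y ∂(μP.map ⇑ι))
      = ∫⁻ p in A ×ˢ B, g p.1 ∂μP := by
    rw [setLIntegral_map hιAB_open.measurableSet hGgmeas ι.continuous.measurable]
    rw [Set.preimage_image_eq _ ι.injective]
    refine lintegral_congr fun p => ?_
    rw [hGg]
    simp only
    rw [ι.symm_apply_apply]
  have hstep4 : (∫⁻ p in A ×ˢ B, g p.1 ∂μP)
      = (∫⁻ a in A, g a ∂volume) * (volume B) := by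
    rw [hμP, ← Measure.prod_restrict]
    rw [lintegral_prod (fun p => g p.1) ((hg.comp measurable_fst).aemeasurable)]
    have h7 : ∀ a : Fin m → ℂ, (∫⁻ _ in B, g a ∂volume) = g a * volume B := by
      intro a
      rw [setLIntegral_const]
    simp_rw [h7]
    rw [lintegral_mul_const _ hg]
  have hkey : (∫⁻ z in s, ENNReal.ofReal |detf z| * g (π z) ∂volume)
      = (c : ENNReal) * ((∫⁻ a in A, g a ∂volume) * (volume B)) := by
    rw [← hchange', hHs]
    conv_lhs => rw [hvol]
    rw [Measure.restrict_smul, lintegral_smul_measure, hstep3, hstep4, smul_eq_mul]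
  -- bounds on the Jacobian on s
  have hjb : ∀ z ∈ s, d / 2 < |detf z| ∧ |detf z| < 2 * d := fun z hz => hs₁P z (hss₁ hz)
  have hlower : ENNReal.ofReal (d / 2) * (∫⁻ z in s, g (π z) ∂volume)
      ≤ ∫⁻ z in s, ENNReal.ofReal |detf z| * g (π z) ∂volume := by
    rw [← lintegral_const_mul' _ _ (by simp : ENNReal.ofReal (d / 2) ≠ ⊤)]
    apply setLIntegral_mono' hsmeas
    intro z hz
    exact mul_le_mul_left (ENNReal.ofReal_le_ofReal (le_of_lt (hjb z hz).1)) _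
  have hupper : (∫⁻ z in s, ENNReal.ofReal |detf z| * g (π z) ∂volume)
      ≤ ENNReal.ofReal (2 * d) * (∫⁻ z in s, g (π z) ∂volume) := by
    rw [← lintegral_const_mul' _ _ (ENNReal.ofReal_ne_top : ENNReal.ofReal (2 * d) ≠ ⊤)]
    apply setLIntegral_mono' hsmeas
    intro z hz
    exact mul_le_mul_left (ENNReal.ofReal_le_ofReal (le_of_lt (hjb z hz).2)) _
  have hvolBpos : 0 < volume B := Metric.measure_ball_pos _ _ rbpos
  have hvolBfin : volume B < ⊤ := measure_ball_lt_top
  have hcne : (c : ENNReal) ≠ 0 := by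
    simpa using hcpos.ne'
  constructor
  · -- finiteness of ∫ g∘π on s implies finiteness of ∫ g on A
    intro hfin
    by_contra hnot
    rw [not_lt, top_le_iff] at hnot
    have h1 : (∫⁻ z in s, ENNReal.ofReal |detf z| * g (π z) ∂volume) = ⊤ := by
      rw [hkey, hnot, ENNReal.top_mul hvolBpos.ne', ENNReal.mul_top hcne]
    have h2 : (∫⁻ z in s, ENNReal.ofReal |detf z| * g (π z) ∂volume) < ⊤ :=
      lt_of_le_of_lt hupper (ENNReal.mul_lt_top ENNReal.ofReal_lt_top hfin)
    rw [h1] at h2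
    exact absurd h2 (lt_irrefl _)
  · -- finiteness of ∫ g on A implies finiteness of ∫ g∘π on s
    intro hfin
    have h1 : (∫⁻ z in s, ENNReal.ofReal |detf z| * g (π z) ∂volume) < ⊤ := by
      rw [hkey]
      exact ENNReal.mul_lt_top ENNReal.coe_lt_top (ENNReal.mul_lt_top hfin hvolBfin)
    by_contra hnot
    rw [not_lt, top_le_iff] at hnot
    have h2 : ENNReal.ofReal (d / 2) * (∫⁻ z in s, g (π z) ∂volume) = ⊤ := by
      rw [hnot, ENNReal.mul_top]
      rw [ne_eq, ENNReal.ofReal_eq_zero, not_le]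
      linarith
    have h3 := lt_of_le_of_lt (h2 ▸ hlower) h1
    exact absurd h3 (lt_irrefl _)

open Metric Set Filter in
/-- Local coordinate content of `π*𝒥(φ) = 𝒥(π*φ)` for a smooth morphism: if
`π : ℂ^k → ℂ^m` is a holomorphic submersion on the open set `U`, then `V := π(U)` is
open, and `g` is locally integrable on `V` iff `g ∘ π` is locally integrable on `U`. -/
theorem bertini_submersion_iff (k m : ℕ) (hm : 1 ≤ m) (hkm : m ≤ k)
    (U : Set (Fin k → ℂ)) (hU : IsOpen U)
    (π : (Fin k → ℂ) → (Fin m → ℂ)) (hπ : DifferentiableOn ℂ π U)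
    (hsub : ∀ x ∈ U, Function.Surjective (fderiv ℂ π x))
    (g : (Fin m → ℂ) → ENNReal) (hg : Measurable g) :
    IsOpen (π '' U) ∧
      (ELocallyIntegrableOn g (π '' U) volume ↔ ELocallyIntegrableOn (g ∘ π) U volume) := by
  have hopen : IsOpen (π '' U) := by
    rw [isOpen_iff_mem_nhds]
    rintro y ⟨x, hx, rfl⟩
    have hstrict : HasStrictFDerivAt π (fderiv ℂ π x) x := holo_hasStrictFDerivAt hU hπ hx
    have hrange : LinearMap.range (fderiv ℂ π x : (Fin k → ℂ) →ₗ[ℂ] (Fin m → ℂ)) = ⊤ :=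
      LinearMap.range_eq_top (f := (fderiv ℂ π x : (Fin k → ℂ) →ₗ[ℂ] (Fin m → ℂ))).2 (hsub x hx)
    have hmap := HasStrictFDerivAt.map_nhds_eq_of_surj hstrict hrange
    rw [← hmap, Filter.mem_map]
    exact Filter.mem_of_superset (hU.mem_nhds hx) (Set.subset_preimage_image π U)
  refine ⟨hopen, ?_, ?_⟩
  · -- g locally integrable on V implies g ∘ π locally integrable on U
    intro hloc x hx
    obtain ⟨t', ht', hfin⟩ := hloc (π x) ⟨x, hx, rfl⟩
    rw [mem_nhdsWithin] at ht'
    obtain ⟨o, hoopen, hyo, hosub⟩ := ht'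
    have htopen : IsOpen (U ∩ π ⁻¹' o) :=
      hπ.continuousOn.isOpen_inter_preimage hU hoopen
    have hxt : x ∈ U ∩ π ⁻¹' o := ⟨hx, hyo⟩
    obtain ⟨s, A, hsopen, hxs, hst, hAopen, hπxA, hAsub, hiff⟩ :=
      local_chart_lintegral k m hkm U hU π hπ hsub g hg hx htopen hxt
        Set.inter_subset_left
    have hAsub' : A ⊆ t' := by
      intro a ha
      obtain ⟨z, hz, rfl⟩ := hAsub ha
      exact hosub ⟨(hst hz).2, ⟨z, (hst hz).1, rfl⟩⟩
    have hfinA : (∫⁻ y in A, g y ∂volume) < ⊤ :=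
      lt_of_le_of_lt (lintegral_mono_set hAsub') hfin
    refine ⟨s, mem_nhdsWithin_of_mem_nhds (hsopen.mem_nhds hxs), ?_⟩
    simpa [Function.comp] using hiff.2 hfinA
  · -- g ∘ π locally integrable on U implies g locally integrable on V
    intro hloc y hy
    obtain ⟨x, hx, rfl⟩ := hy
    obtain ⟨t', ht', hfin⟩ := hloc x hx
    rw [mem_nhdsWithin] at ht'
    obtain ⟨o, hoopen, hxo, hosub⟩ := ht'
    have htopen : IsOpen (o ∩ U) := hoopen.inter hU
    have hxt : x ∈ o ∩ U := ⟨hxo, hx⟩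
    obtain ⟨s, A, hsopen, hxs, hst, hAopen, hπxA, hAsub, hiff⟩ :=
      local_chart_lintegral k m hkm U hU π hπ hsub g hg hx htopen hxt
        Set.inter_subset_right
    have hst' : s ⊆ t' := fun z hz => hosub (hst hz)
    have hfins : (∫⁻ z in s, g (π z) ∂volume) < ⊤ := by
      refine lt_of_le_of_lt (lintegral_mono_set hst') ?_
      simpa [Function.comp] using hfin
    exact ⟨A, mem_nhdsWithin_of_mem_nhds (hAopen.mem_nhds hπxA), hiff.1 hfins⟩
end
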